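/- Let f : L → L′ be a homomorphism of lattices and 𝒞 a cofan in L. Then f(𝒞) = {f(σ) : σ ∈ 𝒞} is a cofan in L′. Moreover, for any integral cone σ in L, the set of cofaces of the cone f(σ) equals the set of images under f of the cofaces of σ. -/

import Mathlib

open Pointwise

/-- An integral cone in `L`: a subset containing `0` and closed under addition. -/
def IsCone {L : Type*} [AddCommMonoid L] (σ : Set L) : Prop :=
  0 ∈ σ ∧ ∀ a ∈ σ, ∀ b ∈ σ, a + b ∈ σ

/-- A face of a cone `σ`: a nonempty subset `τ ⊆ σ` such that for `a, b ∈ σ`,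
`a + b ∈ τ` if and only if `a ∈ τ` and `b ∈ τ`. -/
def IsFace {L : Type*} [AddCommMonoid L] (σ τ : Set L) : Prop :=
  τ.Nonempty ∧ τ ⊆ σ ∧ ∀ a ∈ σ, ∀ b ∈ σ, (a + b ∈ τ ↔ a ∈ τ ∧ b ∈ τ)

/-- `σ'` is a coface of `σ`: the localisation `σ − κ` of `σ` at a subcone
`κ ⊆ σ`. -/
def IsCoface {L : Type*} [AddCommGroup L] (σ' σ : Set L) : Prop :=
  ∃ κ : Set L, IsCone κ ∧ κ ⊆ σ ∧ σ' = σ - κ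

/-- A cofan in `L`: a set of cones closed under cofaces such that the sum of
any two of its cones is a coface of the first. -/
def IsCofan {L : Type*} [AddCommGroup L] (C : Set (Set L)) : Prop :=
  (∀ σ ∈ C, IsCone σ) ∧
  (∀ σ ∈ C, ∀ τ : Set L, IsFace σ τ → σ - τ ∈ C) ∧
  (∀ σ ∈ C, ∀ σ' ∈ C, ∃ τ : Set L, IsFace σ τ ∧ σ + σ' = σ - τ)

/-- A face of a cone is a cone. -/
lemma IsFace.isCone {L : Type*} [AddCommMonoid L] {σ τ : Set L} (hσ : IsCone σ)
    (h : IsFace σ τ) : IsCone τ := by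
  obtain ⟨⟨a, ha⟩, hsub, hiff⟩ := h
  have h0 : (0 : L) ∈ τ := by
    have := (hiff a (hsub ha) 0 hσ.1).mp (by rwa [add_zero])
    exact this.2
  exact ⟨h0, fun x hx y hy => (hiff x (hsub hx) y (hsub hy)).mpr ⟨hx, hy⟩⟩

lemma image_isCone {L L' : Type*} [AddCommMonoid L] [AddCommMonoid L']
    (f : L →+ L') {σ : Set L} (h : IsCone σ) : IsCone (⇑f '' σ) := by
  refine ⟨⟨0, h.1, f.map_zero⟩, ?_⟩
  rintro _ ⟨a, ha, rfl⟩ _ ⟨b, hb, rfl⟩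
  exact ⟨a + b, h.2 a ha b hb, f.map_add a b⟩

lemma image_sub' {L L' : Type*} [AddCommGroup L] [AddCommGroup L']
    (f : L →+ L') (s t : Set L) : ⇑f '' (s - t) = ⇑f '' s - ⇑f '' t := by
  ext x
  simp only [Set.mem_image, Set.mem_sub]
  constructor
  · rintro ⟨_, ⟨a, ha, b, hb, rfl⟩, rfl⟩
    exact ⟨f a, ⟨a, ha, rfl⟩, f b, ⟨b, hb, rfl⟩, (f.map_sub a b).symm⟩
  · rintro ⟨_, ⟨a, ha, rfl⟩, _, ⟨b, hb, rfl⟩, rfl⟩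
    exact ⟨a - b, ⟨a, ha, b, hb, rfl⟩, f.map_sub a b⟩

lemma image_add' {L L' : Type*} [AddCommGroup L] [AddCommGroup L']
    (f : L →+ L') (s t : Set L) : ⇑f '' (s + t) = ⇑f '' s + ⇑f '' t := by
  ext x
  simp only [Set.mem_image, Set.mem_add]
  constructor
  · rintro ⟨_, ⟨a, ha, b, hb, rfl⟩, rfl⟩
    exact ⟨f a, ⟨a, ha, rfl⟩, f b, ⟨b, hb, rfl⟩, (f.map_add a b).symm⟩
  · rintro ⟨_, ⟨a, ha, rfl⟩, _, ⟨b, hb, rfl⟩, rfl⟩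
    exact ⟨a + b, ⟨a, ha, b, hb, rfl⟩, f.map_add a b⟩

/-- Saturate a subcone `κ` of a cone `σ` to a face without changing the
localisation. -/
lemma saturate {L : Type*} [AddCommGroup L] {σ κ : Set L} (hσ : IsCone σ)
    (hκ : IsCone κ) (hsub : κ ⊆ σ) :
    ∃ τ : Set L, IsFace σ τ ∧ σ - κ = σ - τ := by
  refine ⟨{x ∈ σ | ∃ y ∈ σ, x + y ∈ κ}, ⟨⟨0, hσ.1, 0, hσ.1, by simpa using hκ.1⟩,
    fun x hx => hx.1, ?_⟩, ?_⟩
  · rintro a ha b hb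
    constructor
    · rintro ⟨-, y, hy, hk⟩
      exact ⟨⟨ha, b + y, hσ.2 b hb y hy, by rwa [← add_assoc]⟩,
        ⟨hb, a + y, hσ.2 a ha y hy, by rwa [show b + (a + y) = a + b + y by abel]⟩⟩
    · rintro ⟨⟨-, y, hy, hky⟩, ⟨-, z, hz, hkz⟩⟩
      refine ⟨hσ.2 a ha b hb, y + z, hσ.2 y hy z hz, ?_⟩
      have := hκ.2 _ hky _ hkz
      rwa [show a + y + (b + z) = a + b + (y + z) by abel] at this
  · apply Set.Subset.antisymm
    · refine Set.sub_subset_sub (le_refl σ) ?_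
      intro k hk
      exact ⟨hsub hk, 0, hσ.1, by simpa using hk⟩
    · rintro x hx
      rw [Set.mem_sub] at hx ⊢
      obtain ⟨s, hs, t, ⟨ht, y, hy, hk⟩, rfl⟩ := hx
      exact ⟨s + y, hσ.2 s hs y hy, t + y, hk, by abel⟩

/-- the pushforward of a cofan along a lattice homomorphism is a
cofan, and the cofaces of `f(σ)` are exactly the images of the cofaces of `σ`. -/
theorem stmt9
    {L L' : Type*} [AddCommGroup L] [Module.Free ℤ L] [Module.Finite ℤ L]
    [AddCommGroup L'] [Module.Free ℤ L'] [Module.Finite ℤ L']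
    (f : L →+ L') (C : Set (Set L)) (hC : IsCofan C) :
    IsCofan (Set.image (Set.image ⇑f) C) ∧
    ∀ σ : Set L, IsCone σ →
      {κ' : Set L' | IsCoface κ' (⇑f '' σ)} =
        Set.image (Set.image ⇑f) {κ : Set L | IsCoface κ σ} := by
  obtain ⟨hcone, hface, hsum⟩ := hC
  constructor
  · refine ⟨?_, ?_, ?_⟩
    · rintro _ ⟨σ, hσ, rfl⟩
      exact image_isCone f (hcone σ hσ)
    · rintro _ ⟨σ, hσ, rfl⟩ τ' hτ'
      -- pull back the face
      obtain ⟨⟨c, hc⟩, hsub', hiff'⟩ := hτ'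
      set τ : Set L := σ ∩ ⇑f ⁻¹' τ' with hτdef
      have himg : ⇑f '' τ = τ' := by
        apply Set.Subset.antisymm
        · rintro _ ⟨a, ⟨-, ha⟩, rfl⟩; exact ha
        · intro c hc'
          obtain ⟨a, ha, rfl⟩ := hsub' hc'
          exact ⟨a, ⟨ha, hc'⟩, rfl⟩
      have hfaceτ : IsFace σ τ := by
        refine ⟨?_, Set.inter_subset_left, ?_⟩
        · obtain ⟨a, ha, rfl⟩ := hsub' hc
          exact ⟨a, ha, hc⟩
        · intro a ha b hb
          have := hiff' (f a) ⟨a, ha, rfl⟩ (f b) ⟨b, hb, rfl⟩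
          rw [← f.map_add] at this
          constructor
          · rintro ⟨-, h⟩
            obtain ⟨h1, h2⟩ := this.mp h
            exact ⟨⟨ha, h1⟩, ⟨hb, h2⟩⟩
          · rintro ⟨⟨-, h1⟩, ⟨-, h2⟩⟩
            exact ⟨hcone σ hσ |>.2 a ha b hb, this.mpr ⟨h1, h2⟩⟩
      refine ⟨σ - τ, hface σ hσ τ hfaceτ, ?_⟩
      rw [image_sub', himg]
    · rintro _ ⟨σ, hσ, rfl⟩ _ ⟨σ', hσ', rfl⟩
      obtain ⟨τ, hfaceτ, heq⟩ := hsum σ hσ σ' hσ'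
      have hτcone : IsCone (⇑f '' τ) := image_isCone f (hfaceτ.isCone (hcone σ hσ))
      have hτsub : ⇑f '' τ ⊆ ⇑f '' σ := Set.image_mono hfaceτ.2.1
      obtain ⟨τ'', hface'', heq''⟩ := saturate (image_isCone f (hcone σ hσ)) hτcone hτsub
      refine ⟨τ'', hface'', ?_⟩
      rw [← image_add', heq, image_sub', heq'']
  · intro σ hσ
    ext κ'
    simp only [Set.mem_setOf_eq, Set.mem_image]
    constructor
    · rintro ⟨κ', hκ'cone, hκ'sub, rfl⟩
      set κ : Set L := σ ∩ ⇑f ⁻¹' κ' with hκdef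
      have himg : ⇑f '' κ = κ' := by
        apply Set.Subset.antisymm
        · rintro _ ⟨a, ⟨-, ha⟩, rfl⟩; exact ha
        · intro c hc'
          obtain ⟨a, ha, rfl⟩ := hκ'sub hc'
          exact ⟨a, ⟨ha, hc'⟩, rfl⟩
      have hκcone : IsCone κ := by
        refine ⟨⟨hσ.1, by simpa using hκ'cone.1⟩, ?_⟩
        rintro a ⟨ha, ha'⟩ b ⟨hb, hb'⟩
        refine ⟨hσ.2 a ha b hb, ?_⟩
        simpa [f.map_add] using hκ'cone.2 _ ha' _ hb'
      exact ⟨σ - κ, ⟨κ, hκcone, Set.inter_subset_left, rfl⟩,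
        by rw [image_sub', himg]⟩
    · rintro ⟨_, ⟨κ, hκcone, hκsub, rfl⟩, rfl⟩
      exact ⟨⇑f '' κ, image_isCone f hκcone, Set.image_mono hκsub,
        by rw [image_sub']⟩
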